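/- (Localization formula for P² with respect to an operator 𝔄) Let H be a Hilbert space, D ⊆ H a subspace, P symmetric on D with P(D) ⊆ D, and 𝔄 with 𝔄(D) ⊆ D and 𝔄*(D) ⊆ D. Then for all ψ ∈ D: Re⟨P²ψ, 𝔄𝔄*ψ⟩ = ‖P(𝔄*ψ)‖² − ‖[𝔄*, P]ψ‖² + Re⟨Pψ, [[P,𝔄],𝔄*]ψ⟩ + Re(⟨Pψ, 𝔄*[P,𝔄]ψ⟩ − conj(⟨Pψ, 𝔄[P,𝔄*]ψ⟩)). -/

import Mathlib

open Complex

/-- Localization formula for `P²` with respect to an operator `𝔄` (here `A`, with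
formal adjoint `As` on the subspace `D`): for `ψ ∈ D`,
`Re⟨P²ψ, 𝔄𝔄*ψ⟩ = ‖P(𝔄*ψ)‖² − ‖[𝔄*,P]ψ‖² + Re⟨Pψ, [[P,𝔄],𝔄*]ψ⟩
  + Re(⟨Pψ, 𝔄*[P,𝔄]ψ⟩ − conj⟨Pψ, 𝔄[P,𝔄*]ψ⟩)`,
where `⟨f,g⟩` denotes the physicists' inner product, linear in the first argument
(so `⟨f,g⟩ = ⟪g,f⟫` in Mathlib's convention). -/
theorem stmt15 {H : Type*} [NormedAddCommGroup H] [InnerProductSpace ℂ H]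
    (D : Submodule ℂ H) (P A As : H →ₗ[ℂ] H)
    (hPD : ∀ x ∈ D, P x ∈ D) (hAD : ∀ x ∈ D, A x ∈ D) (hAsD : ∀ x ∈ D, As x ∈ D)
    (hPsym : ∀ x ∈ D, ∀ y ∈ D, (inner ℂ (P x) y : ℂ) = inner ℂ x (P y))
    (hadj : ∀ x ∈ D, ∀ y ∈ D, (inner ℂ (A x) y : ℂ) = inner ℂ x (As y))
    (ψ : H) (hψ : ψ ∈ D) :
    (inner ℂ (A (As ψ)) (P (P ψ)) : ℂ).re
      = ‖P (As ψ)‖ ^ 2 - ‖As (P ψ) - P (As ψ)‖ ^ 2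
        + (inner ℂ ((P (A (As ψ)) - A (P (As ψ))) - (As (P (A ψ)) - As (A (P ψ))))
            (P ψ) : ℂ).re
        + ((inner ℂ (As (P (A ψ)) - As (A (P ψ))) (P ψ) : ℂ)
            - (starRingEnd ℂ) (inner ℂ (A (P (As ψ)) - A (As (P ψ))) (P ψ) : ℂ)).re := by
  have hPψ := hPD ψ hψ
  have hAsψ := hAsD ψ hψ
  have hAψ := hAD ψ hψ
  have hPAsψ := hPD _ hAsψ
  have hAsPψ := hAsD _ hPψ
  have hAAsψ := hAD _ hAsψ
  have hPPψ := hPD _ hPψ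
  have e1 : (inner ℂ (P (A (As ψ))) (P ψ) : ℂ) = inner ℂ (A (As ψ)) (P (P ψ)) :=
    hPsym _ hAAsψ _ hPψ
  have e2 : (inner ℂ (A (As (P ψ))) (P ψ) : ℂ) = inner ℂ (As (P ψ)) (As (P ψ)) :=
    hadj _ (hAsD _ hPψ) _ hPψ
  have e3 : (inner ℂ (A (P (As ψ))) (P ψ) : ℂ) = inner ℂ (P (As ψ)) (As (P ψ)) :=
    hadj _ hPAsψ _ hPψ
  have hn : ‖As (P ψ) - P (As ψ)‖ ^ 2
      = ‖As (P ψ)‖ ^ 2 - 2 * (inner ℂ (As (P ψ)) (P (As ψ)) : ℂ).re + ‖P (As ψ)‖ ^ 2 :=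
    by simpa using @norm_sub_sq ℂ H _ _ _ (As (P ψ)) (P (As ψ))
  have hs : (inner ℂ (As (P ψ)) (P (As ψ)) : ℂ).re = (inner ℂ (P (As ψ)) (As (P ψ)) : ℂ).re :=
    by rw [← inner_conj_symm, Complex.conj_re]
  have hn2 : (inner ℂ (As (P ψ)) (As (P ψ)) : ℂ).re = ‖As (P ψ)‖ ^ 2 :=
    by simpa using @inner_self_eq_norm_sq ℂ H _ _ _ (As (P ψ))
  have re1 := congrArg Complex.re e1
  have re2 := congrArg Complex.re e2
  have re3 := congrArg Complex.re e3
  simp only [inner_sub_left, map_sub, Complex.sub_re, Complex.conj_re] at *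
  linarith
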